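/- Let U ⊂ ℝ^d be a Borel set with 0 < λ(U) < ∞, let 0 < t < d, and assume I_t(U) < ∞. Define the measure η by η(A) = ∫_{A∩U} ( ∫_U |x−y|^{−t} dy )^{−1} dx. Then η(A) ≤ |A|^t for every Borel set A, and η(U) ≥ λ(U)^2 / I_t(U). -/

import Mathlib

open MeasureTheory Filter Set
open scoped ENNReal Topology

noncomputable section

/-- The `t`-dimensional Riesz energy of a set `U ⊆ ℝ^d`. -/
noncomputable def rieszEnergyR (d : ℕ) (t : ℝ) (U : Set (EuclideanSpace ℝ (Fin d))) : ℝ≥0∞ :=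
  ∫⁻ x in U, ∫⁻ y in U, edist x y ^ (-t) ∂volume ∂volume

/-- **Properties of the normalised potential measure.** For a Borel set `U ⊆ ℝ^d` of
positive finite measure and `0 < t < d` with `I_t(U) < ∞`, the measure
`η(A) = ∫_{A ∩ U} (∫_U |x-y|^{-t} dy)⁻¹ dx`
satisfies `η(A) ≤ |A|^t` for every Borel set `A`, and `η(U) ≥ λ(U)² / I_t(U)`. -/
theorem potential_measure_bounds
    (d : ℕ) (hd : 0 < d)
    (U : Set (EuclideanSpace ℝ (Fin d))) (hU : MeasurableSet U)
    (hU0 : 0 < volume U) (hUfin : volume U < ⊤)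
    (t : ℝ) (ht0 : 0 < t) (htd : t < d)
    (hI : rieszEnergyR d t U < ⊤)
    (η : Set (EuclideanSpace ℝ (Fin d)) → ℝ≥0∞)
    (hη : ∀ A, η A = ∫⁻ x in A ∩ U, (∫⁻ y in U, edist x y ^ (-t) ∂volume)⁻¹ ∂volume) :
    (∀ A : Set (EuclideanSpace ℝ (Fin d)), MeasurableSet A →
        η A ≤ EMetric.diam A ^ t) ∧
      volume U ^ 2 / rieszEnergyR d t U ≤ η U := by
  set F : EuclideanSpace ℝ (Fin d) → ℝ≥0∞ :=
    fun x => ∫⁻ y in U, edist x y ^ (-t) ∂volume with hF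
  have hFmeas : Measurable F := (measurable_edist.pow_const _).lintegral_prod_right'
  have hpt : ∀ x y : EuclideanSpace ℝ (Fin d), 0 < edist x y ^ (-t) := by
    intro x y
    rcases eq_or_ne (edist x y) 0 with h | h
    · simp [h, ENNReal.zero_rpow_of_neg (neg_neg_of_pos ht0)]
    · exact ENNReal.rpow_pos (pos_iff_ne_zero.mpr h) (edist_ne_top x y)
  have hFpos : ∀ x, 0 < F x := by
    intro x
    have hmx : Measurable fun y : EuclideanSpace ℝ (Fin d) => edist x y ^ (-t) :=
      (measurable_const.edist measurable_id).pow_const _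
    have hsupp : (Function.support fun y => edist x y ^ (-t)) = univ :=
      eq_univ_of_forall fun y => (hpt x y).ne'
    have := (lintegral_pos_iff_support (μ := volume.restrict U) hmx).mpr
      (by rw [hsupp, Measure.restrict_apply_univ]; exact hU0)
    exact this
  constructor
  · intro A hA
    rcases eq_or_ne (EMetric.diam A) ⊤ with hdiam | hdiam
    · rw [hdiam, ENNReal.top_rpow_of_pos ht0]; exact le_top
    rcases eq_or_ne (volume (A ∩ U)) 0 with hAU | hAU
    · rw [hη A, setLIntegral_measure_zero _ _ hAU]; exact zero_le
    have hvfin : volume (A ∩ U) ≠ ⊤ :=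
      (lt_of_le_of_lt (measure_mono inter_subset_right) hUfin).ne
    have hdt_ne_top : EMetric.diam A ^ t ≠ ⊤ := ENNReal.rpow_ne_top_of_nonneg ht0.le hdiam
    have hdnt_ne_zero : EMetric.diam A ^ (-t) ≠ 0 := by
      rw [ENNReal.rpow_neg]
      exact ENNReal.inv_ne_zero.mpr hdt_ne_top
    have hm : ∀ x ∈ A ∩ U, EMetric.diam A ^ (-t) * volume (A ∩ U) ≤ F x := by
      intro x hx
      calc EMetric.diam A ^ (-t) * volume (A ∩ U)
          = ∫⁻ _ in A ∩ U, EMetric.diam A ^ (-t) ∂volume := (setLIntegral_const _ _).symm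
        _ ≤ ∫⁻ y in A ∩ U, edist x y ^ (-t) ∂volume := by
            refine setLIntegral_mono ((measurable_const.edist measurable_id).pow_const _) fun y hy => ?_
            have hle : edist x y ≤ EMetric.diam A := EMetric.edist_le_diam_of_mem hx.1 hy.1
            rw [ENNReal.rpow_neg, ENNReal.rpow_neg, ENNReal.inv_le_inv]
            exact ENNReal.rpow_le_rpow hle ht0.le
        _ ≤ F x := lintegral_mono_set inter_subset_right
    rw [hη A]
    calc ∫⁻ x in A ∩ U, (F x)⁻¹ ∂volume
        ≤ ∫⁻ _ in A ∩ U, (EMetric.diam A ^ (-t) * volume (A ∩ U))⁻¹ ∂volume := by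
          refine setLIntegral_mono measurable_const fun x hx => ?_
          exact ENNReal.inv_le_inv.mpr (hm x hx)
      _ = (EMetric.diam A ^ (-t) * volume (A ∩ U))⁻¹ * volume (A ∩ U) := setLIntegral_const _ _
      _ = EMetric.diam A ^ t := by
          rw [ENNReal.mul_inv (Or.inl hdnt_ne_zero) (Or.inr hAU), ENNReal.rpow_neg, inv_inv,
            mul_assoc, ENNReal.inv_mul_cancel hAU hvfin, mul_one]
  · have hηU : η U = ∫⁻ x in U, (F x)⁻¹ ∂volume := by rw [hη U, inter_self]
    have hIU : rieszEnergyR d t U = ∫⁻ x in U, F x ∂volume := rfl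
    have hIne0 : rieszEnergyR d t U ≠ 0 := by
      rw [hIU]
      have hsupp : Function.support F = univ :=
        eq_univ_of_forall fun x => (hFpos x).ne'
      exact ((lintegral_pos_iff_support hFmeas).mpr
        (by rw [hsupp, Measure.restrict_apply_univ]; exact hU0)).ne'
    have hFlt : ∀ᵐ x ∂(volume.restrict U), F x < ⊤ := ae_lt_top hFmeas (hIU ▸ hI).ne
    have hconj : Real.HolderConjugate 2 2 := Real.HolderConjugate.two_two
    have h := ENNReal.lintegral_mul_le_Lp_mul_Lq (volume.restrict U) hconj
      (f := fun x => F x ^ (-(1/2) : ℝ)) (g := fun x => F x ^ ((1/2) : ℝ))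
      ((hFmeas.pow_const _).aemeasurable) ((hFmeas.pow_const _).aemeasurable)
    have h1 : (∫⁻ x in U,
        ((fun x => F x ^ (-(1/2) : ℝ)) * fun x => F x ^ ((1/2) : ℝ)) x ∂volume) = volume U := by
      have he : ∀ᵐ x ∂(volume.restrict U),
          ((fun x => F x ^ (-(1/2) : ℝ)) * fun x => F x ^ ((1/2) : ℝ)) x = 1 := by
        filter_upwards [hFlt] with x hx
        simp only [Pi.mul_apply]
        rw [← ENNReal.rpow_add _ _ (hFpos x).ne' hx.ne]
        norm_num
      rw [lintegral_congr_ae he, setLIntegral_one]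
    have h2 : ∀ x : EuclideanSpace ℝ (Fin d), (F x ^ (-(1/2) : ℝ)) ^ (2:ℝ) = (F x)⁻¹ := by
      intro x
      rw [← ENNReal.rpow_mul]
      norm_num [ENNReal.rpow_neg_one]
    have h3 : ∀ x : EuclideanSpace ℝ (Fin d), (F x ^ ((1/2) : ℝ)) ^ (2:ℝ) = F x := by
      intro x
      rw [← ENNReal.rpow_mul]
      norm_num
    rw [h1] at h
    simp only [h2, h3] at h
    have key : volume U ^ 2 ≤ η U * rieszEnergyR d t U := by
      calc volume U ^ 2 = (volume U) ^ (2:ℝ) := by rw [← ENNReal.rpow_natCast]; norm_num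
        _ ≤ ((∫⁻ x in U, (F x)⁻¹ ∂volume) ^ (1/2:ℝ) *
              (∫⁻ x in U, F x ∂volume) ^ (1/2:ℝ)) ^ (2:ℝ) :=
            ENNReal.rpow_le_rpow (by simpa using h) (by norm_num)
        _ = (∫⁻ x in U, (F x)⁻¹ ∂volume) * (∫⁻ x in U, F x ∂volume) := by
            rw [ENNReal.mul_rpow_of_nonneg _ _ (by norm_num : (0:ℝ) ≤ 2),
              ← ENNReal.rpow_mul, ← ENNReal.rpow_mul]
            norm_num
        _ = η U * rieszEnergyR d t U := by rw [hηU, hIU]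
    rw [ENNReal.div_le_iff_le_mul (Or.inl hIne0) (Or.inl hI.ne)]
    exact key
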